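/- For all integers n ≥ 4 and all integers k with 1 ≤ k ≤ n−1, ∑_{j2=k+2}^{n−1} ∑_{j1=k+1}^{j2−1} [∏_{m=j2+2}^{n} (1 − 6/C(m,2))] · (4/C(j2+1,2)) · [∏_{m=j1+2}^{j2} (1 − 3/C(m,2))] · (1/C(j1+1,2)) · [∏_{m=k+2}^{j1} (1 − 1/C(m,2))] · (1/C(k+1,2)) = 16(n+1)(n−k−1)(n−k−2)/((n−1)(n−2)(n−3)(k+1)(k+2)(k+3)(k+4)), where C(m,2) = m(m−1)/2 and empty products equal 1 (and an empty sum equals 0). -/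

import Mathlib

lemma myL1 (k : ℕ) (hk : 1 ≤ k) : ∀ j1 : ℕ, k + 1 ≤ j1 →
    ∏ m ∈ Finset.Icc (k + 2) j1, (1 - 1 / ((m : ℝ) * ((m : ℝ) - 1) / 2)) =
      (k : ℝ) * ((j1 : ℝ) + 1) / (((j1 : ℝ) - 1) * ((k : ℝ) + 2)) := by
  have hk0 : (0:ℝ) < (k:ℝ) := by exact_mod_cast hk
  refine Nat.le_induction ?_ ?_
  · rw [Finset.Icc_eq_empty (by omega)]
    push_cast
    field_simp
    rw [Finset.prod_empty, add_sub_cancel_right, eq_div_iff hk0.ne']; ring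
  · intro j1 hj1 ih
    rw [Finset.prod_Icc_succ_top (by omega), ih]
    have h2 : (2:ℝ) ≤ (j1:ℝ) := by exact_mod_cast Nat.le_trans (by omega) hj1
    push_cast
    have h1 : (j1:ℝ) - 1 ≠ 0 := by nlinarith
    have h0 : (j1:ℝ) ≠ 0 := by nlinarith
    have h3 : (j1:ℝ) + 1 ≠ 0 := by nlinarith
    field_simp
    ring_nf; field_simp



lemma myL3 (j1 : ℕ) (h : 2 ≤ j1) : ∀ j2 : ℕ, j1 + 1 ≤ j2 →
    ∏ m ∈ Finset.Icc (j1 + 2) j2, (1 - 3 / ((m : ℝ) * ((m : ℝ) - 1) / 2)) =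
      ((j1 : ℝ) - 1) * (j1 : ℝ) * ((j2 : ℝ) + 1) * ((j2 : ℝ) + 2) /
        (((j2 : ℝ) - 2) * ((j2 : ℝ) - 1) * ((j1 : ℝ) + 2) * ((j1 : ℝ) + 3)) := by
  have h2 : (2:ℝ) ≤ (j1:ℝ) := by exact_mod_cast h
  refine Nat.le_induction ?_ ?_
  · rw [Finset.Icc_eq_empty (by omega), Finset.prod_empty]
    push_cast
    have a1 : ((j1:ℝ) + 1) - 2 ≠ 0 := by intro hh; linarith
    have a2 : ((j1:ℝ) + 1) - 1 ≠ 0 := by intro hh; linarith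
    have a3 : ((j1:ℝ) + 2) ≠ 0 := by intro hh; linarith
    have a4 : ((j1:ℝ) + 3) ≠ 0 := by intro hh; linarith
    rw [eq_div_iff (mul_ne_zero (mul_ne_zero (mul_ne_zero a1 a2) a3) a4)]
    ring
  · intro j2 hj2 ih
    rw [Finset.prod_Icc_succ_top (by omega), ih]
    have hj : (3:ℝ) ≤ (j2:ℝ) := by exact_mod_cast Nat.le_trans (by omega) hj2
    push_cast
    have hx : ((j2:ℝ) + 1) * (((j2:ℝ) + 1) - 1) / 2 ≠ 0 := by
      intro hh; nlinarith
    have e1 : (1:ℝ) - 3 / (((j2:ℝ) + 1) * (((j2:ℝ) + 1) - 1) / 2)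
        = ((((j2:ℝ) + 1) * (((j2:ℝ) + 1) - 1) / 2) - 3) / (((j2:ℝ) + 1) * (((j2:ℝ) + 1) - 1) / 2) := by
      rw [sub_div, div_self hx]
    have b1 : ((j2:ℝ)) - 2 ≠ 0 := by intro hh; linarith
    have b2 : ((j2:ℝ)) - 1 ≠ 0 := by intro hh; linarith
    have a3 : ((j1:ℝ) + 2) ≠ 0 := by intro hh; linarith
    have a4 : ((j1:ℝ) + 3) ≠ 0 := by intro hh; linarith
    have c1 : ((j2:ℝ) + 1) - 2 ≠ 0 := by intro hh; linarith
    have c2 : ((j2:ℝ) + 1) - 1 ≠ 0 := by intro hh; linarith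
    rw [e1, div_mul_div_comm,
      div_eq_div_iff (mul_ne_zero (mul_ne_zero (mul_ne_zero (mul_ne_zero b1 b2) a3) a4) hx)
        (mul_ne_zero (mul_ne_zero (mul_ne_zero c1 c2) a3) a4)]
    ring

lemma myL6 (j2 : ℕ) (h : 3 ≤ j2) : ∀ n : ℕ, j2 + 1 ≤ n →
    ∏ m ∈ Finset.Icc (j2 + 2) n, (1 - 6 / ((m : ℝ) * ((m : ℝ) - 1) / 2)) =
      ((j2 : ℝ) - 2) * ((j2 : ℝ) - 1) * (j2 : ℝ) * ((n : ℝ) + 1) * ((n : ℝ) + 2) * ((n : ℝ) + 3) /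
        (((n : ℝ) - 3) * ((n : ℝ) - 2) * ((n : ℝ) - 1) * ((j2 : ℝ) + 2) * ((j2 : ℝ) + 3) * ((j2 : ℝ) + 4)) := by
  have h2 : (3:ℝ) ≤ (j2:ℝ) := by exact_mod_cast h
  refine Nat.le_induction ?_ ?_
  · rw [Finset.Icc_eq_empty (by omega), Finset.prod_empty]
    push_cast
    have a1 : ((j2:ℝ) + 1) - 3 ≠ 0 := by intro hh; linarith
    have a2 : ((j2:ℝ) + 1) - 2 ≠ 0 := by intro hh; linarith
    have a3 : ((j2:ℝ) + 1) - 1 ≠ 0 := by intro hh; linarith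
    have a4 : ((j2:ℝ) + 2) ≠ 0 := by intro hh; linarith
    have a5 : ((j2:ℝ) + 3) ≠ 0 := by intro hh; linarith
    have a6 : ((j2:ℝ) + 4) ≠ 0 := by intro hh; linarith
    rw [eq_div_iff (mul_ne_zero (mul_ne_zero (mul_ne_zero (mul_ne_zero (mul_ne_zero a1 a2) a3) a4) a5) a6)]
    ring
  · intro n hn ih
    rw [Finset.prod_Icc_succ_top (by omega), ih]
    have hj : (4:ℝ) ≤ (n:ℝ) := by exact_mod_cast Nat.le_trans (by omega) hn
    push_cast
    have hx : ((n:ℝ) + 1) * (((n:ℝ) + 1) - 1) / 2 ≠ 0 := by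
      intro hh; nlinarith
    have e1 : (1:ℝ) - 6 / (((n:ℝ) + 1) * (((n:ℝ) + 1) - 1) / 2)
        = ((((n:ℝ) + 1) * (((n:ℝ) + 1) - 1) / 2) - 6) / (((n:ℝ) + 1) * (((n:ℝ) + 1) - 1) / 2) := by
      rw [sub_div, div_self hx]
    have b1 : ((n:ℝ)) - 3 ≠ 0 := by intro hh; linarith
    have b2 : ((n:ℝ)) - 2 ≠ 0 := by intro hh; linarith
    have b3 : ((n:ℝ)) - 1 ≠ 0 := by intro hh; linarith
    have a4 : ((j2:ℝ) + 2) ≠ 0 := by intro hh; linarith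
    have a5 : ((j2:ℝ) + 3) ≠ 0 := by intro hh; linarith
    have a6 : ((j2:ℝ) + 4) ≠ 0 := by intro hh; linarith
    have c1 : ((n:ℝ) + 1) - 3 ≠ 0 := by intro hh; linarith
    have c2 : ((n:ℝ) + 1) - 2 ≠ 0 := by intro hh; linarith
    have c3 : ((n:ℝ) + 1) - 1 ≠ 0 := by intro hh; linarith
    rw [e1, div_mul_div_comm,
      div_eq_div_iff
        (mul_ne_zero (mul_ne_zero (mul_ne_zero (mul_ne_zero (mul_ne_zero (mul_ne_zero b1 b2) b3) a4) a5) a6) hx)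
        (mul_ne_zero (mul_ne_zero (mul_ne_zero (mul_ne_zero (mul_ne_zero c1 c2) c3) a4) a5) a6)]
    ring


lemma mySumFrac (k : ℕ) : ∀ b : ℕ, k ≤ b →
    ∑ j ∈ Finset.Icc (k + 1) b, (1 : ℝ) / (((j : ℝ) + 2) * ((j : ℝ) + 3)) =
      1 / ((k : ℝ) + 3) - 1 / ((b : ℝ) + 3) := by
  refine Nat.le_induction ?_ ?_
  · rw [Finset.Icc_eq_empty (by omega), Finset.sum_empty]
    ring
  · intro b hb ih
    rw [Finset.sum_Icc_succ_top (by omega), ih]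
    push_cast
    have a1 : ((b:ℝ) + 2) ≠ 0 := by positivity
    have a2 : ((b:ℝ) + 3) ≠ 0 := by positivity
    have a3 : ((b:ℝ) + 4) ≠ 0 := by positivity
    have a4 : ((k:ℝ) + 3) ≠ 0 := by positivity
    field_simp
    ring

lemma myOuterFrac (k : ℕ) : ∀ N : ℕ, k + 1 ≤ N →
    ∑ j ∈ Finset.Icc (k + 2) N,
        ((j : ℝ) - (k : ℝ) - 1) / (((j : ℝ) + 2) * ((j : ℝ) + 3) * ((j : ℝ) + 4)) =
      ((N : ℝ) - (k : ℝ)) * ((N : ℝ) - (k : ℝ) - 1) /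
        (2 * ((k : ℝ) + 4) * ((N : ℝ) + 3) * ((N : ℝ) + 4)) := by
  refine Nat.le_induction ?_ ?_
  · rw [Finset.Icc_eq_empty (by omega), Finset.sum_empty]
    push_cast
    rw [eq_comm, div_eq_zero_iff]
    left; ring
  · intro N hN ih
    rw [Finset.sum_Icc_succ_top (by omega), ih]
    push_cast
    have a1 : ((N:ℝ) + 2) ≠ 0 := by positivity
    have a2 : ((N:ℝ) + 3) ≠ 0 := by positivity
    have a3 : ((N:ℝ) + 4) ≠ 0 := by positivity
    have a4 : ((N:ℝ) + 5) ≠ 0 := by positivity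
    have a5 : ((k:ℝ) + 4) ≠ 0 := by positivity
    field_simp
    ring

set_option maxHeartbeats 1000000 in
lemma myInnerSum (n k j2 : ℕ) (hk : 1 ≤ k) (hj : k + 2 ≤ j2) (hn : j2 + 1 ≤ n) :
    ∑ j1 ∈ Finset.Icc (k + 1) (j2 - 1),
      (∏ m ∈ Finset.Icc (j2 + 2) n, (1 - 6 / ((m : ℝ) * ((m : ℝ) - 1) / 2))) *
        (4 / (((j2 : ℝ) + 1) * ((j2 : ℝ) + 1 - 1) / 2)) *
      (∏ m ∈ Finset.Icc (j1 + 2) j2, (1 - 3 / ((m : ℝ) * ((m : ℝ) - 1) / 2))) *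
        (1 / (((j1 : ℝ) + 1) * ((j1 : ℝ) + 1 - 1) / 2)) *
      (∏ m ∈ Finset.Icc (k + 2) j1, (1 - 1 / ((m : ℝ) * ((m : ℝ) - 1) / 2))) *
        (1 / (((k : ℝ) + 1) * ((k : ℝ) + 1 - 1) / 2)) =
    (32 * ((n : ℝ) + 1) * ((n : ℝ) + 2) * ((n : ℝ) + 3) /
        (((n : ℝ) - 3) * ((n : ℝ) - 2) * ((n : ℝ) - 1) * ((k : ℝ) + 1) * ((k : ℝ) + 2) * ((k : ℝ) + 3))) *
      (((j2 : ℝ) - (k : ℝ) - 1) / (((j2 : ℝ) + 2) * ((j2 : ℝ) + 3) * ((j2 : ℝ) + 4))) := by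
  have hkR : (1:ℝ) ≤ (k:ℝ) := by exact_mod_cast hk
  have hjR : (k:ℝ) + 2 ≤ (j2:ℝ) := by exact_mod_cast hj
  have hnR : (j2:ℝ) + 1 ≤ (n:ℝ) := by exact_mod_cast hn
  have key : ∀ j1 ∈ Finset.Icc (k + 1) (j2 - 1),
      (∏ m ∈ Finset.Icc (j2 + 2) n, (1 - 6 / ((m : ℝ) * ((m : ℝ) - 1) / 2))) *
        (4 / (((j2 : ℝ) + 1) * ((j2 : ℝ) + 1 - 1) / 2)) *
      (∏ m ∈ Finset.Icc (j1 + 2) j2, (1 - 3 / ((m : ℝ) * ((m : ℝ) - 1) / 2))) *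
        (1 / (((j1 : ℝ) + 1) * ((j1 : ℝ) + 1 - 1) / 2)) *
      (∏ m ∈ Finset.Icc (k + 2) j1, (1 - 1 / ((m : ℝ) * ((m : ℝ) - 1) / 2))) *
        (1 / (((k : ℝ) + 1) * ((k : ℝ) + 1 - 1) / 2)) =
      (32 * ((n : ℝ) + 1) * ((n : ℝ) + 2) * ((n : ℝ) + 3) /
          (((n : ℝ) - 3) * ((n : ℝ) - 2) * ((n : ℝ) - 1) * ((j2 : ℝ) + 3) * ((j2 : ℝ) + 4) *
            ((k : ℝ) + 1) * ((k : ℝ) + 2))) *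
        (1 / (((j1 : ℝ) + 2) * ((j1 : ℝ) + 3))) := by
    intro j1 hj1
    rw [Finset.mem_Icc] at hj1
    have hj1R : (k:ℝ) + 1 ≤ (j1:ℝ) := by exact_mod_cast hj1.1
    have hj12R : (j1:ℝ) + 1 ≤ (j2:ℝ) := by
      have : j1 + 1 ≤ j2 := by omega
      exact_mod_cast this
    rw [myL6 j2 (by omega) n hn, myL3 j1 (by omega) j2 (by omega), myL1 k hk j1 (by omega)]
    simp only [div_mul_div_comm, one_mul, mul_one]
    refine (div_eq_div_iff ?_ ?_).mpr ?_
    · apply ne_of_gt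
      repeat' first | apply mul_pos | apply div_pos
      all_goals nlinarith
    · apply ne_of_gt
      repeat' first | apply mul_pos | apply div_pos
      all_goals nlinarith
    · ring
  rw [Finset.sum_congr rfl key, ← Finset.mul_sum, mySumFrac k (j2 - 1) (by omega)]
  have hc : ((j2 - 1 : ℕ) : ℝ) = (j2 : ℝ) - 1 := by
    have : (1:ℕ) ≤ j2 := by omega
    push_cast [this]
    ring
  rw [hc]
  rw [show (1:ℝ)/((k:ℝ)+3) - 1/((j2:ℝ) - 1 + 3)
      = ((j2:ℝ) - (k:ℝ) - 1) / (((k:ℝ)+3) * ((j2:ℝ)+2)) from by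
    rw [div_sub_div _ _ (by nlinarith) (by nlinarith)]
    rw [div_eq_div_iff (by nlinarith) (by nlinarith)]
    ring]
  simp only [div_mul_div_comm, one_mul, mul_one]
  refine (div_eq_div_iff ?_ ?_).mpr ?_
  · apply ne_of_gt
    repeat' first | apply mul_pos | apply div_pos
    all_goals nlinarith
  · apply ne_of_gt
    repeat' first | apply mul_pos | apply div_pos
    all_goals nlinarith
  · ring



/-- Probability that two random disjoint pairs of tips both coalesce at the `k`-th
speciation event (case (iii)), for a Yule tree with `n` tips. -/
theorem stmt2 (n k : ℕ) (hn : 4 ≤ n) (hk1 : 1 ≤ k) (hk2 : k ≤ n - 1) :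
    ∑ j2 ∈ Finset.Icc (k + 2) (n - 1), ∑ j1 ∈ Finset.Icc (k + 1) (j2 - 1),
      (∏ m ∈ Finset.Icc (j2 + 2) n, (1 - 6 / ((m : ℝ) * ((m : ℝ) - 1) / 2))) *
        (4 / (((j2 : ℝ) + 1) * ((j2 : ℝ) + 1 - 1) / 2)) *
      (∏ m ∈ Finset.Icc (j1 + 2) j2, (1 - 3 / ((m : ℝ) * ((m : ℝ) - 1) / 2))) *
        (1 / (((j1 : ℝ) + 1) * ((j1 : ℝ) + 1 - 1) / 2)) *
      (∏ m ∈ Finset.Icc (k + 2) j1, (1 - 1 / ((m : ℝ) * ((m : ℝ) - 1) / 2))) *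
        (1 / (((k : ℝ) + 1) * ((k : ℝ) + 1 - 1) / 2)) =
    16 * ((n : ℝ) + 1) * ((n : ℝ) - (k : ℝ) - 1) * ((n : ℝ) - (k : ℝ) - 2) /
      (((n : ℝ) - 1) * ((n : ℝ) - 2) * ((n : ℝ) - 3) *
        ((k : ℝ) + 1) * ((k : ℝ) + 2) * ((k : ℝ) + 3) * ((k : ℝ) + 4)) := by
  by_cases hcase : k + 3 ≤ n
  · have key : ∀ j2 ∈ Finset.Icc (k + 2) (n - 1),
        (∑ j1 ∈ Finset.Icc (k + 1) (j2 - 1),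
          (∏ m ∈ Finset.Icc (j2 + 2) n, (1 - 6 / ((m : ℝ) * ((m : ℝ) - 1) / 2))) *
            (4 / (((j2 : ℝ) + 1) * ((j2 : ℝ) + 1 - 1) / 2)) *
          (∏ m ∈ Finset.Icc (j1 + 2) j2, (1 - 3 / ((m : ℝ) * ((m : ℝ) - 1) / 2))) *
            (1 / (((j1 : ℝ) + 1) * ((j1 : ℝ) + 1 - 1) / 2)) *
          (∏ m ∈ Finset.Icc (k + 2) j1, (1 - 1 / ((m : ℝ) * ((m : ℝ) - 1) / 2))) *
            (1 / (((k : ℝ) + 1) * ((k : ℝ) + 1 - 1) / 2))) =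
        (32 * ((n : ℝ) + 1) * ((n : ℝ) + 2) * ((n : ℝ) + 3) /
            (((n : ℝ) - 3) * ((n : ℝ) - 2) * ((n : ℝ) - 1) * ((k : ℝ) + 1) * ((k : ℝ) + 2) * ((k : ℝ) + 3))) *
          (((j2 : ℝ) - (k : ℝ) - 1) / (((j2 : ℝ) + 2) * ((j2 : ℝ) + 3) * ((j2 : ℝ) + 4))) := by
      intro j2 hj2
      rw [Finset.mem_Icc] at hj2
      exact myInnerSum n k j2 hk1 hj2.1 (by omega)
    rw [Finset.sum_congr rfl key, ← Finset.mul_sum, myOuterFrac k (n - 1) (by omega)]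
    have hc : ((n - 1 : ℕ) : ℝ) = (n : ℝ) - 1 := by
      have : (1:ℕ) ≤ n := by omega
      push_cast [this]
      ring
    rw [hc]
    have hnR : (k:ℝ) + 3 ≤ (n:ℝ) := by exact_mod_cast hcase
    have hkR : (1:ℝ) ≤ (k:ℝ) := by exact_mod_cast hk1
    simp only [div_mul_div_comm, one_mul, mul_one]
    refine (div_eq_div_iff ?_ ?_).mpr ?_
    · apply ne_of_gt
      repeat' first | apply mul_pos | apply div_pos
      all_goals nlinarith
    · apply ne_of_gt
      repeat' first | apply mul_pos | apply div_pos
      all_goals nlinarith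
    · ring
  · rw [Finset.Icc_eq_empty (by omega), Finset.sum_empty, eq_comm, div_eq_zero_iff]
    left
    have hnk : n = k + 2 ∨ n = k + 1 := by omega
    rcases hnk with h | h <;> subst h <;> push_cast <;> ring
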